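/- For any a > 0, a/(1+a²) ≤ e^{a²/2} · ∫_a^∞ e^{−t²/2} dt ≤ 1/a. -/

import Mathlib

open Real MeasureTheory Set Filter

private lemma expInt (a : ℝ) : IntegrableOn (fun t : ℝ => Real.exp (-t ^ 2 / 2)) (Set.Ioi a) := by
  have h := integrable_exp_neg_mul_sq (by norm_num : (0:ℝ) < 1/2)
  have he : (fun t : ℝ => Real.exp (-t ^ 2 / 2)) = fun t => Real.exp (-(1/2) * t ^ 2) := by
    ext t; ring_nf
  rw [he]; exact h.integrableOn

private lemma deriv1 (t : ℝ) : HasDerivAt (fun t : ℝ => -Real.exp (-t ^ 2 / 2))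
    (t * Real.exp (-t ^ 2 / 2)) t := by
  have h : HasDerivAt (fun t : ℝ => -t ^ 2 / 2) (-t) t := by
    have := ((hasDerivAt_pow 2 t).neg).div_const 2
    exact this.congr_deriv (by push_cast; ring)
  have := h.exp.neg
  exact this.congr_deriv (by ring)

private lemma tend1 : Tendsto (fun t : ℝ => Real.exp (-t ^ 2 / 2)) atTop (nhds 0) := by
  apply Real.tendsto_exp_atBot.comp
  have h : Tendsto (fun t : ℝ => t ^ 2) atTop atTop := tendsto_pow_atTop (by norm_num)
  have := (tendsto_neg_atTop_atBot.comp h).atBot_div_const (by norm_num : (0:ℝ) < 2)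
  exact this

private lemma int_t_exp (a : ℝ) :
    ∫ t in Set.Ioi a, t * Real.exp (-t ^ 2 / 2) = Real.exp (-a ^ 2 / 2) := by
  have := integral_Ioi_of_hasDerivAt_of_tendsto
    (f := fun t : ℝ => -Real.exp (-t ^ 2 / 2)) (f' := fun t => t * Real.exp (-t ^ 2 / 2))
    ((deriv1 a).continuousAt.continuousWithinAt) (fun x _ => deriv1 x) ?_ (tend1.neg)
  · rw [this]; ring_nf
  · -- integrability of t * exp(-t^2/2) on Ioi a
    have h := integrable_mul_exp_neg_mul_sq (by norm_num : (0:ℝ) < 1/2)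
    have he : (fun t : ℝ => t * Real.exp (-t ^ 2 / 2)) = fun t => t * Real.exp (-(1/2) * t ^ 2) := by
      ext t; ring_nf
    rw [he]; exact h.integrableOn

theorem stmt1 (a : ℝ) (ha : 0 < a) :
    a / (1 + a ^ 2) ≤ Real.exp (a ^ 2 / 2) * ∫ t in Set.Ioi a, Real.exp (-t ^ 2 / 2) ∧
      Real.exp (a ^ 2 / 2) * ∫ t in Set.Ioi a, Real.exp (-t ^ 2 / 2) ≤ 1 / a := by
  have hexp : Real.exp (a ^ 2 / 2) * Real.exp (-a ^ 2 / 2) = 1 := by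
    rw [← Real.exp_add]; ring_nf; exact Real.exp_zero
  constructor
  · -- lower bound
    -- f t = -exp(-t^2/2)/t, f' t = exp(-t^2/2) + exp(-t^2/2)/t^2
    set f : ℝ → ℝ := fun t => -Real.exp (-t ^ 2 / 2) * t⁻¹ with hf
    set f' : ℝ → ℝ := fun t => Real.exp (-t ^ 2 / 2) + Real.exp (-t ^ 2 / 2) / t ^ 2 with hf'
    have hderiv : ∀ x ∈ Set.Ici a, HasDerivAt f (f' x) x := by
      intro x hx
      have hx0 : x ≠ 0 := by have : (0:ℝ) < x := lt_of_lt_of_le ha hx; linarith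
      have h1 := (deriv1 x).mul (hasDerivAt_inv hx0)
      refine h1.congr_deriv ?_; symm
      rw [hf', mul_comm x, mul_assoc, mul_inv_cancel₀ hx0, mul_one, neg_mul_neg,
        div_eq_mul_inv, ← inv_pow]
      ring
    have hint2 : IntegrableOn f' (Set.Ioi a) := by
      apply (expInt a).add
      apply Integrable.mono' ((expInt a).div_const (a ^ 2))
      · apply Measurable.aestronglyMeasurable
        exact (by measurability : Measurable fun t : ℝ => Real.exp (-t ^ 2 / 2) / t ^ 2)
      · filter_upwards [ae_restrict_mem measurableSet_Ioi] with t ht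
        have hta : a < t := ht
        have : Real.exp (-t ^ 2 / 2) / t ^ 2 ≤ Real.exp (-t ^ 2 / 2) / a ^ 2 := by
          apply div_le_div_of_nonneg_left (Real.exp_pos _).le (by positivity)
          nlinarith
        rw [Real.norm_eq_abs, abs_of_nonneg (by positivity)]
        exact this
    have key : ∫ t in Set.Ioi a, f' t = Real.exp (-a ^ 2 / 2) / a := by
      have htend : Tendsto f atTop (nhds 0) := by
        have := (tend1.neg).mul tendsto_inv_atTop_zero
        rw [hf]
        convert this using 2 <;> simp
      have := integral_Ioi_of_hasDerivAt_of_tendsto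
        ((hderiv a (Set.self_mem_Ici)).continuousAt.continuousWithinAt)
        (fun x hx => hderiv x (Set.Ioi_subset_Ici_self hx)) hint2 htend
      rw [this, hf]
      field_simp
      ring
    -- pointwise: (a^2/(1+a^2)) * f' t ≤ exp(-t^2/2)
    have hmono : (a ^ 2 / (1 + a ^ 2)) * ∫ t in Set.Ioi a, f' t ≤
        ∫ t in Set.Ioi a, Real.exp (-t ^ 2 / 2) := by
      rw [← MeasureTheory.integral_const_mul]
      apply setIntegral_mono_on (hint2.const_mul _) (expInt a) measurableSet_Ioi
      intro t ht
      have hta : a < t := ht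
      have h1 : f' t ≤ Real.exp (-t ^ 2 / 2) * (1 + a ^ 2) / a ^ 2 := by
        rw [hf']
        have : Real.exp (-t ^ 2 / 2) / t ^ 2 ≤ Real.exp (-t ^ 2 / 2) / a ^ 2 := by
          apply div_le_div_of_nonneg_left (Real.exp_pos _).le (by positivity)
          nlinarith
        have h2 : Real.exp (-t ^ 2 / 2) + Real.exp (-t ^ 2 / 2) / a ^ 2
            = Real.exp (-t ^ 2 / 2) * (1 + a ^ 2) / a ^ 2 := by field_simp; ring
        linarith
      have hpos : (0:ℝ) < a ^ 2 / (1 + a ^ 2) := by positivity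
      calc (a ^ 2 / (1 + a ^ 2)) * f' t ≤ (a ^ 2 / (1 + a ^ 2)) * (Real.exp (-t ^ 2 / 2) * (1 + a ^ 2) / a ^ 2) :=
            mul_le_mul_of_nonneg_left h1 hpos.le
        _ = Real.exp (-t ^ 2 / 2) := by field_simp
    rw [key] at hmono
    have : a / (1 + a ^ 2) * Real.exp (-a ^ 2 / 2) ≤ ∫ t in Set.Ioi a, Real.exp (-t ^ 2 / 2) := by
      calc a / (1 + a ^ 2) * Real.exp (-a ^ 2 / 2)
          = (a ^ 2 / (1 + a ^ 2)) * (Real.exp (-a ^ 2 / 2) / a) := by field_simp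
        _ ≤ _ := hmono
    calc a / (1 + a ^ 2) = Real.exp (a ^ 2 / 2) * (a / (1 + a ^ 2) * Real.exp (-a ^ 2 / 2)) := by
          rw [show Real.exp (a ^ 2 / 2) * (a / (1 + a ^ 2) * Real.exp (-a ^ 2 / 2))
            = (Real.exp (a ^ 2 / 2) * Real.exp (-a ^ 2 / 2)) * (a / (1 + a ^ 2)) by ring, hexp]
          ring
      _ ≤ _ := by
          apply mul_le_mul_of_nonneg_left this (Real.exp_pos _).le
  · -- upper bound
    have hmono : ∫ t in Set.Ioi a, Real.exp (-t ^ 2 / 2) ≤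
        ∫ t in Set.Ioi a, (t / a) * Real.exp (-t ^ 2 / 2) := by
      have hInt : IntegrableOn (fun t : ℝ => (t / a) * Real.exp (-t ^ 2 / 2)) (Set.Ioi a) := by
        have h := integrable_mul_exp_neg_mul_sq (by norm_num : (0:ℝ) < 1/2)
        have : (fun t : ℝ => (t / a) * Real.exp (-t ^ 2 / 2))
            = fun t => (1/a) * (t * Real.exp (-(1/2) * t ^ 2)) := by ext t; ring_nf
        rw [this]; exact (h.const_mul _).integrableOn
      apply setIntegral_mono_on (expInt a) hInt measurableSet_Ioi
      intro t ht
      have hta : a < t := ht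
      have h1 : (1:ℝ) ≤ t / a := (one_le_div ha).mpr hta.le
      nlinarith [Real.exp_pos (-t ^ 2 / 2), mul_le_mul_of_nonneg_right h1 (Real.exp_pos (-t ^ 2 / 2)).le]
    have heval : ∫ t in Set.Ioi a, (t / a) * Real.exp (-t ^ 2 / 2) = Real.exp (-a ^ 2 / 2) / a := by
      have : (fun t : ℝ => (t / a) * Real.exp (-t ^ 2 / 2))
          = fun t => (1/a) * (t * Real.exp (-t ^ 2 / 2)) := by ext t; ring
      rw [this, MeasureTheory.integral_const_mul, int_t_exp]
      ring
    rw [heval] at hmono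
    calc Real.exp (a ^ 2 / 2) * ∫ t in Set.Ioi a, Real.exp (-t ^ 2 / 2)
        ≤ Real.exp (a ^ 2 / 2) * (Real.exp (-a ^ 2 / 2) / a) := by
          apply mul_le_mul_of_nonneg_left hmono (Real.exp_pos _).le
      _ = 1 / a := by rw [show Real.exp (a ^ 2 / 2) * (Real.exp (-a ^ 2 / 2) / a)
            = (Real.exp (a ^ 2 / 2) * Real.exp (-a ^ 2 / 2)) / a by ring, hexp]
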